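/- Let W be a standard Brownian motion, θ > 0, and for each integer k ≥ 1 let u_k(t) = u_k(0)·exp(−(θk² + 1/2)t + W(t)) with u_k(0) ≠ 0. Then for every T > 0 and all integers k ≠ n ≥ 1, θ = (1/(T(k² − n²)))·ln(u_n(T)u_k(0)/(u_k(T)u_n(0))). -/

import Mathlib

/-- closed-form exact estimator (E3): with
`u_k(t) = u_k(0)·exp(−(θk² + 1/2)t + W(t))`, `W(0) = 0`, `u_k(0) ≠ 0`, `θ > 0`,
for every `T > 0` and integers `k ≠ n`, `k, n ≥ 1`,
`θ = (1/(T(k² − n²)))·ln(u_n(T)u_k(0)/(u_k(T)u_n(0)))`. -/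
theorem stmt_15 (W : ℝ → ℝ) (hW0 : W 0 = 0) (θ : ℝ) (hθ : 0 < θ)
    (u0 : ℕ → ℝ) (hu0 : ∀ k, u0 k ≠ 0) (u : ℕ → ℝ → ℝ)
    (hu : ∀ k t, u k t = u0 k * Real.exp (-(θ * (k : ℝ) ^ 2 + 1 / 2) * t + W t))
    (T : ℝ) (hT : 0 < T) (k n : ℕ) (hk : 1 ≤ k) (hn : 1 ≤ n) (hkn : k ≠ n) :
    θ = (1 / (T * ((k : ℝ) ^ 2 - (n : ℝ) ^ 2)))
          * Real.log (u n T * u k 0 / (u k T * u n 0)) := by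
  have hne : (k : ℝ) ^ 2 - (n : ℝ) ^ 2 ≠ 0 := by
    have : (k : ℝ) ≠ (n : ℝ) := by exact_mod_cast hkn
    have hk0 : (0:ℝ) ≤ k := Nat.cast_nonneg k
    have hn0 : (0:ℝ) ≤ n := Nat.cast_nonneg n
    intro h
    apply this
    have := sub_eq_zero.mp h
    nlinarith [sq_nonneg ((k:ℝ) - n), sq_nonneg ((k:ℝ) + n)]
  have harg : u n T * u k 0 / (u k T * u n 0)
      = Real.exp (θ * ((k : ℝ) ^ 2 - (n : ℝ) ^ 2) * T) := by
    rw [hu n T, hu k 0, hu k T, hu n 0, hW0]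
    simp only [mul_zero, zero_add, add_zero, Real.exp_zero, mul_one]
    have h1 := hu0 k
    have h2 := hu0 n
    have h3 : Real.exp (-(θ * (k : ℝ) ^ 2 + 1 / 2) * T + W T) ≠ 0 := Real.exp_ne_zero _
    have key : Real.exp (θ * ((k : ℝ) ^ 2 - (n : ℝ) ^ 2) * T)
        * Real.exp (-(θ * (k : ℝ) ^ 2 + 1 / 2) * T + W T)
        = Real.exp (-(θ * (n : ℝ) ^ 2 + 1 / 2) * T + W T) := by
      rw [← Real.exp_add]; congr 1; ring
    rw [div_eq_iff (by exact mul_ne_zero (mul_ne_zero h1 h3) h2)]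
    rw [← key]; ring
  rw [harg, Real.log_exp]
  field_simp
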